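/- Let (X,P) be an irreducible Markov chain on a countable state space, and suppose there exist ε ∈ (0,1) and a finite subset A ⊂ X with sup_{x∈X} Σ_{y∈X∖A} p(x,y) < ε. Then Σ_{n≥1} f^{(n)}(x,y) = 1 for all x, y ∈ X (i.e., from any starting point the chain reaches any state with probability one). -/

import Mathlib

open scoped Classical ENNReal

noncomputable section

/-- The `n`-step transition probabilities: the entries of the `n`-th matrix power of `p`. -/
def matPow {X : Type*} (p : X → X → ℝ) : ℕ → X → X → ℝ
  | 0 => fun x y => if x = y then 1 else 0
  | n + 1 => fun x y => ∑' z, matPow p n x z * p z y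

/-- The first-return probabilities `f⁽ⁿ⁾(x,y)`. -/
def fret {X : Type*} (p : X → X → ℝ) : ℕ → X → X → ℝ
  | 0 => fun _ _ => 0
  | 1 => fun x y => p x y
  | n + 2 => fun x y => ∑' z, if z = y then 0 else p x z * fret p (n + 1) z y

/-- `p` is a stochastic matrix. -/
def IsStochastic {X : Type*} (p : X → X → ℝ) : Prop :=
  (∀ x y, 0 ≤ p x y) ∧ (∀ x, Summable (p x)) ∧ (∀ x, ∑' y, p x y = 1)

lemma my_fubini_nonneg {α β : Type*} {f : α → β → ℝ} (h0 : ∀ a b, 0 ≤ f a b)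
    (hrow : ∀ a, Summable (f a)) (hsum : Summable fun a => ∑' b, f a b) :
    (∀ b, Summable fun a => f a b) ∧ (Summable fun b => ∑' a, f a b) ∧
      (∑' b, ∑' a, f a b) = ∑' a, ∑' b, f a b := by
  have hU : Summable (Function.uncurry f) :=
    (summable_prod_of_nonneg (fun q => h0 q.1 q.2)).mpr ⟨hrow, hsum⟩
  have hswap : Summable (fun q : β × α => f q.2 q.1) := hU.prod_symm
  have h2 := (summable_prod_of_nonneg (f := fun q : β × α => f q.2 q.1)
    (fun q => h0 q.2 q.1)).mp hswap
  exact ⟨h2.1, h2.2, Summable.tsum_comm' hU hrow h2.1⟩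

/-- The taboo powers: probability of avoiding `y` during the first `n` steps. -/
def qf {X : Type*} (p : X → X → ℝ) (y : X) : ℕ → X → ℝ
  | 0 => fun _ => 1
  | n + 1 => fun x => ∑' z, if z = y then 0 else p x z * qf p y n z

section Main
variable {X : Type*} [Countable X] {p : X → X → ℝ} (hp : IsStochastic p)
include hp

lemma summable_dom (x : X) {g : X → ℝ} (hg0 : ∀ z, 0 ≤ g z) (hg1 : ∀ z, g z ≤ p x z) :
    Summable g := Summable.of_nonneg_of_le hg0 hg1 (hp.2.1 x)

lemma summable_ite_mul (x y : X) {g : X → ℝ} (hg0 : ∀ z, 0 ≤ g z) (hg1 : ∀ z, g z ≤ 1) :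
    Summable (fun z => if z = y then 0 else p x z * g z) := by
  refine summable_dom hp x (fun z => ?_) (fun z => ?_)
  · by_cases h : z = y
    · simp [h]
    · simp only [h, if_false]; exact mul_nonneg (hp.1 x z) (hg0 z)
  · by_cases h : z = y
    · simp [h]; exact hp.1 x y
    · simp only [h, if_false]
      calc p x z * g z ≤ p x z * 1 := mul_le_mul_of_nonneg_left (hg1 z) (hp.1 x z)
        _ = p x z := mul_one _

lemma tsum_ite_le_one (x y : X) {g : X → ℝ} (hg0 : ∀ z, 0 ≤ g z) (hg1 : ∀ z, g z ≤ 1) :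
    (∑' z, if z = y then 0 else p x z * g z) ≤ 1 := by
  have h := Summable.tsum_le_tsum (f := fun z => if z = y then 0 else p x z * g z) (g := p x)
    (fun z => ?_) (summable_ite_mul hp x y hg0 hg1) (hp.2.1 x)
  · rw [hp.2.2 x] at h; exact h
  · by_cases h : z = y
    · simp [h]; exact hp.1 x y
    · simp only [h, if_false]
      calc p x z * g z ≤ p x z * 1 := mul_le_mul_of_nonneg_left (hg1 z) (hp.1 x z)
        _ = p x z := mul_one _

lemma qf_nonneg (y : X) : ∀ n x, 0 ≤ qf p y n x := by
  intro n
  induction n with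
  | zero => intro x; simp [qf]
  | succ n ih =>
    intro x
    refine tsum_nonneg fun z => ?_
    by_cases h : z = y
    · simp [h]
    · simp only [h, if_false]; exact mul_nonneg (hp.1 x z) (ih z)

lemma qf_le_one (y : X) : ∀ n x, qf p y n x ≤ 1 := by
  intro n
  induction n with
  | zero => intro x; simp [qf]
  | succ n ih =>
    intro x
    exact tsum_ite_le_one hp x y (qf_nonneg hp y n) ih

lemma qf_summand_summable (y : X) (n : ℕ) (x : X) :
    Summable (fun z => if z = y then 0 else p x z * qf p y n z) :=
  summable_ite_mul hp x y (qf_nonneg hp y n) (qf_le_one hp y n)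

lemma qf_succ_le (y : X) : ∀ n x, qf p y (n + 1) x ≤ qf p y n x := by
  intro n
  induction n with
  | zero => intro x; exact (qf_le_one hp y 1 x).trans_eq (by simp [qf])
  | succ n ih =>
    intro x
    show (∑' z, if z = y then 0 else p x z * qf p y (n+1) z) ≤
      ∑' z, if z = y then 0 else p x z * qf p y n z
    refine Summable.tsum_le_tsum (fun z => ?_) (qf_summand_summable hp y (n+1) x)
      (qf_summand_summable hp y n x)
    by_cases h : z = y
    · simp [h]
    · simp only [h, if_false]
      exact mul_le_mul_of_nonneg_left (ih z) (hp.1 x z)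

lemma qf_antitone (y : X) (x : X) : Antitone (fun n => qf p y n x) :=
  antitone_nat_of_succ_le fun n => qf_succ_le hp y n x

lemma fret_nonneg (y : X) : ∀ n x, 0 ≤ fret p n x y := by
  intro n
  induction n using Nat.twoStepInduction with
  | zero => intro x; simp [fret]
  | one => intro x; simpa [fret] using hp.1 x y
  | more n ih ih2 =>
    intro x
    refine tsum_nonneg fun z => ?_
    by_cases h : z = y
    · simp [h]
    · simp only [h, if_false]; exact mul_nonneg (hp.1 x z) (ih2 z)

lemma fret_le_one (y : X) : ∀ n x, fret p n x y ≤ 1 := by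
  intro n
  induction n using Nat.twoStepInduction with
  | zero => intro x; simp [fret]
  | one =>
    intro x
    have := Summable.le_tsum (hp.2.1 x) y (fun j _ => hp.1 x j)
    rw [hp.2.2 x] at this
    simpa [fret] using this
  | more n ih ih2 =>
    intro x
    exact tsum_ite_le_one hp x y (fret_nonneg hp y (n+1)) (ih2)

lemma fret_summand_summable (y : X) (n : ℕ) (x : X) :
    Summable (fun z => if z = y then 0 else p x z * fret p n z y) :=
  summable_ite_mul hp x y (fret_nonneg hp y n) (fret_le_one hp y n)

/-- partial sums of first-passage probabilities. -/
lemma qf_add_sum_fret (y : X) : ∀ n x,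
    qf p y n x + ∑ k ∈ Finset.range (n + 1), fret p k x y = 1 := by
  intro n
  induction n with
  | zero => intro x; simp [qf, fret]
  | succ n ih =>
    intro x
    have hS : ∀ z, ∑ k ∈ Finset.range (n + 1), fret p k z y
        = ∑ k ∈ Finset.range n, fret p (k + 1) z y := by
      intro z; rw [Finset.sum_range_succ' (fun k => fret p k z y) n]; simp [fret]
    have key : ∑ k ∈ Finset.range (n + 2), fret p k x y
        = p x y + ∑' z, if z = y then 0
            else p x z * ∑ k ∈ Finset.range (n + 1), fret p k z y := by
      rw [Finset.sum_range_succ' (fun k => fret p k x y) (n+1)]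
      have h1 : ∑ k ∈ Finset.range (n + 1), fret p (k+1) x y
          = fret p 1 x y + ∑ k ∈ Finset.range n, fret p (k + 2) x y := by
        rw [Finset.sum_range_succ' (fun k => fret p (k+1) x y) n]
        ring
      rw [h1]
      have h2 : ∑ k ∈ Finset.range n, fret p (k + 2) x y
          = ∑' z, if z = y then 0
              else p x z * ∑ k ∈ Finset.range n, fret p (k + 1) z y := by
        have := Summable.tsum_finsetSum (f := fun (k : ℕ) (z : X) =>
            if z = y then 0 else p x z * fret p (k+1) z y) (s := Finset.range n)
            (fun k _ => fret_summand_summable hp y (k+1) x)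
        rw [show (∑ k ∈ Finset.range n, fret p (k + 2) x y)
            = ∑ k ∈ Finset.range n, ∑' z, (if z = y then 0 else p x z * fret p (k+1) z y)
            from Finset.sum_congr rfl (fun k _ => by simp [fret]), ← this]
        congr 1
        funext z
        by_cases h : z = y <;> simp [h, Finset.mul_sum]
      rw [h2]
      have h3 : (∑' z, if z = y then 0
            else p x z * ∑ k ∈ Finset.range n, fret p (k + 1) z y)
          = ∑' z, if z = y then 0
            else p x z * ∑ k ∈ Finset.range (n+1), fret p k z y := by
        congr 1; funext z
        by_cases h : z = y
        · simp [h]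
        · simp only [h, if_false, hS z]
      rw [h3]
      show fret p 1 x y + _ + fret p 0 x y = _
      simp only [fret]
      ring
    show qf p y (n+1) x + _ = 1
    rw [key, qf]
    have hsum1 : Summable (fun z => if z = y then 0 else p x z * qf p y n z) :=
      qf_summand_summable hp y n x
    have hSb : ∀ z, (0:ℝ) ≤ ∑ k ∈ Finset.range (n + 1), fret p k z y := fun z =>
      Finset.sum_nonneg fun k _ => fret_nonneg hp y k z
    have hSb1 : ∀ z, (∑ k ∈ Finset.range (n + 1), fret p k z y) ≤ 1 := fun z => by
      have := ih z
      nlinarith [qf_nonneg hp y n z]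
    have hsum2 : Summable (fun z => if z = y then 0
        else p x z * ∑ k ∈ Finset.range (n + 1), fret p k z y) :=
      summable_ite_mul hp x y hSb hSb1
    have comb : (∑' z, if z = y then 0 else p x z * qf p y n z)
        + (∑' z, if z = y then 0 else p x z * ∑ k ∈ Finset.range (n+1), fret p k z y)
        = ∑' z, if z = y then 0 else p x z := by
      rw [← Summable.tsum_add hsum1 hsum2]
      congr 1; funext z
      by_cases h : z = y
      · simp [h]
      · simp [h, ← mul_add, ih z]
    have split : (∑' z, if z = y then 0 else p x z) = 1 - p x y := by
      have hdecomp : ∀ z, p x z = (if z = y then p x y else 0)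
          + (if z = y then 0 else p x z) := by
        intro z; by_cases h : z = y <;> simp [h]
      have hs2 : Summable (fun z => if z = y then 0 else p x z) :=
        summable_dom hp x
          (fun z => by by_cases h : z = y
                       · simp [h]
                       · simp only [h, if_false]; exact hp.1 x z)
          (fun z => by by_cases h : z = y
                       · simp [h]; exact hp.1 x y
                       · simp [h])
      have hs1 : Summable (fun z => if z = y then p x y else (0:ℝ)) :=
        summable_of_finite_support (by
          apply Set.Finite.subset (Set.finite_singleton y)
          intro z hz
          simp only [Function.support, Set.mem_setOf_eq, ne_eq] at hz
          by_cases h : z = y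
          · simp [h]
          · simp [h] at hz)
      have := Summable.tsum_add hs1 hs2
      rw [← tsum_congr hdecomp] at this
      rw [hp.2.2 x, (tsum_ite_eq y (fun _ => p x y) : (∑' b : X, if b = y then p x y else 0) = p x y)] at this
      linarith
    linarith [comb, split]

  -- continuation: matPow lemmas (will append before `end Main`)
lemma matPow_nonneg : ∀ n x y, 0 ≤ matPow p n x y := by
  intro n
  induction n with
  | zero => intro x y; by_cases h : x = y <;> simp [matPow, h]
  | succ n ih =>
    intro x y
    exact tsum_nonneg fun z => mul_nonneg (ih x z) (hp.1 z y)

lemma p_le_one (x y : X) : p x y ≤ 1 := by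
  have := Summable.le_tsum (hp.2.1 x) y (fun j _ => hp.1 x j)
  rwa [hp.2.2 x] at this

lemma matPow_summable_rowsum :
    ∀ n, (∀ x, Summable (matPow p n x)) ∧ (∀ x, ∑' y, matPow p n x y = 1) := by
  intro n
  induction n with
  | zero =>
    constructor
    · intro x
      apply summable_of_finite_support
      apply Set.Finite.subset (Set.finite_singleton x)
      intro z hz
      simp only [Function.support, Set.mem_setOf_eq, ne_eq, matPow] at hz
      by_cases h : x = z
      · simp [h]
      · simp [h] at hz
    · intro x
      have : (fun y => matPow p 0 x y) = fun y => if y = x then (1:ℝ) else 0 := by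
        funext y; simp only [matPow]; by_cases h : x = y <;> simp [h, eq_comm]
      simp only [matPow]
      rw [show (∑' y, if x = y then (1:ℝ) else 0) = ∑' y, if y = x then (1:ℝ) else 0 from
        tsum_congr (fun y => by by_cases h : x = y <;> simp [h, eq_comm])]
      exact tsum_ite_eq x 1
  | succ n ih =>
    obtain ⟨ihs, ihr⟩ := ih
    have key : ∀ x, (∀ y, Summable fun z => matPow p n x z * p z y) ∧
        (Summable fun y => ∑' z, matPow p n x z * p z y) ∧
        (∑' y, ∑' z, matPow p n x z * p z y) = ∑' z, ∑' y, matPow p n x z * p z y := by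
      intro x
      apply my_fubini_nonneg
      · intro z y; exact mul_nonneg (matPow_nonneg hp n x z) (hp.1 z y)
      · intro z; exact (hp.2.1 z).mul_left _
      · have : (fun z => ∑' y, matPow p n x z * p z y) = fun z => matPow p n x z := by
          funext z; rw [tsum_mul_left, hp.2.2 z, mul_one]
        rw [this]; exact ihs x
    constructor
    · intro x
      have := (key x).2.1
      simpa only [matPow] using this
    · intro x
      have heq : (∑' y, matPow p (n+1) x y) = ∑' y, ∑' z, matPow p n x z * p z y := by
        simp only [matPow]
      rw [heq, (key x).2.2]
      have : (fun z => ∑' y, matPow p n x z * p z y) = fun z => matPow p n x z := by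
        funext z; rw [tsum_mul_left, hp.2.2 z, mul_one]
      rw [this]; exact ihr x

lemma matPow_le_one (n : ℕ) (x y : X) : matPow p n x y ≤ 1 := by
  have h := Summable.le_tsum ((matPow_summable_rowsum hp n).1 x) y
    (fun j _ => matPow_nonneg hp n x j)
  rwa [(matPow_summable_rowsum hp n).2 x] at h

lemma matPow_succ_left : ∀ n x y, matPow p (n+1) x y = ∑' z, p x z * matPow p n z y := by
  intro n
  induction n with
  | zero =>
    intro x y
    have l : matPow p 1 x y = p x y := by
      simp only [matPow]
      rw [tsum_eq_single x (fun z hz => by simp [Ne.symm hz])]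
      simp
    have r : (∑' z, p x z * matPow p 0 z y) = p x y := by
      rw [tsum_eq_single y (fun z hz => by simp [matPow, hz])]
      simp [matPow]
    rw [l, r]
  | succ n ih =>
    intro x y
    have fub : (∀ z, Summable fun w => p x w * (matPow p n w z * p z y)) ∧
        (Summable fun z => ∑' w, p x w * (matPow p n w z * p z y)) ∧
        (∑' z, ∑' w, p x w * (matPow p n w z * p z y))
          = ∑' w, ∑' z, p x w * (matPow p n w z * p z y) := by
      apply my_fubini_nonneg
      · intro w z
        exact mul_nonneg (hp.1 x w) (mul_nonneg (matPow_nonneg hp n w z) (hp.1 z y))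
      · intro w
        apply Summable.mul_left
        refine Summable.of_nonneg_of_le
          (fun z => mul_nonneg (matPow_nonneg hp n w z) (hp.1 z y))
          (fun z => ?_) ((matPow_summable_rowsum hp n).1 w)
        calc matPow p n w z * p z y ≤ matPow p n w z * 1 :=
              mul_le_mul_of_nonneg_left (p_le_one hp z y) (matPow_nonneg hp n w z)
          _ = matPow p n w z := mul_one _
      · have : (fun w => ∑' z, p x w * (matPow p n w z * p z y))
            = fun w => p x w * matPow p (n+1) w y := by
          funext w
          rw [tsum_mul_left]
          congr 1
        rw [this]
        refine Summable.of_nonneg_of_le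
          (fun w => mul_nonneg (hp.1 x w) (matPow_nonneg hp (n+1) w y))
          (fun w => ?_) (hp.2.1 x)
        calc p x w * matPow p (n+1) w y ≤ p x w * 1 :=
              mul_le_mul_of_nonneg_left (matPow_le_one hp (n+1) w y) (hp.1 x w)
          _ = p x w := mul_one _
    have lhs : matPow p (n+2) x y = ∑' z, (∑' w, p x w * matPow p n w z) * p z y := by
      show (∑' z, matPow p (n+1) x z * p z y) = _
      exact tsum_congr fun z => by rw [ih x z]
    rw [lhs]
    have step1 : (∑' z, (∑' w, p x w * matPow p n w z) * p z y)
        = ∑' z, ∑' w, p x w * (matPow p n w z * p z y) := by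
      refine tsum_congr fun z => ?_
      rw [← tsum_mul_right]
      exact tsum_congr fun w => by ring
    rw [step1, fub.2.2]
    refine tsum_congr fun w => ?_
    rw [tsum_mul_left]
    congr 1

lemma qf_add_matPow_le (y : X) : ∀ m x, x ≠ y → qf p y m x + matPow p m x y ≤ 1 := by
  intro m
  induction m with
  | zero => intro x hxy; simp [qf, matPow, hxy]
  | succ m ih =>
    intro x _
    rw [matPow_succ_left hp m x y]
    have hsum1 := qf_summand_summable hp y m x
    have hsum2 : Summable fun z => p x z * matPow p m z y := by
      refine Summable.of_nonneg_of_le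
        (fun z => mul_nonneg (hp.1 x z) (matPow_nonneg hp m z y)) (fun z => ?_) (hp.2.1 x)
      calc p x z * matPow p m z y ≤ p x z * 1 :=
            mul_le_mul_of_nonneg_left (matPow_le_one hp m z y) (hp.1 x z)
        _ = p x z := mul_one _
    show (∑' z, if z = y then 0 else p x z * qf p y m z) + (∑' z, p x z * matPow p m z y) ≤ 1
    rw [← Summable.tsum_add hsum1 hsum2]
    have := Summable.tsum_le_tsum (f := fun z =>
        (if z = y then 0 else p x z * qf p y m z) + p x z * matPow p m z y) (g := p x)
      (fun z => ?_) (hsum1.add hsum2) (hp.2.1 x)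
    · rwa [hp.2.2 x] at this
    · 
      by_cases h : z = y
      · rw [if_pos h, zero_add]
        calc p x z * matPow p m z y ≤ p x z * 1 :=
              mul_le_mul_of_nonneg_left (matPow_le_one hp m z y) (hp.1 x z)
          _ = p x z := mul_one _
      · simp only [h, if_false]
        rw [← mul_add]
        calc p x z * (qf p y m z + matPow p m z y) ≤ p x z * 1 :=
              mul_le_mul_of_nonneg_left (ih z h) (hp.1 x z)
          _ = p x z := mul_one _

lemma qf_submul (y : X) (n : ℕ) (b : ℝ) (hb : 0 ≤ b) (hbn : ∀ z, qf p y n z ≤ b) :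
    ∀ m x, qf p y (m + n) x ≤ b * qf p y m x := by
  intro m
  induction m with
  | zero => intro x; simpa [qf] using hbn x
  | succ m ih =>
    intro x
    show qf p y (m + 1 + n) x ≤ b * qf p y (m+1) x
    have : m + 1 + n = (m + n) + 1 := by omega
    rw [this]
    show (∑' z, if z = y then 0 else p x z * qf p y (m+n) z) ≤ b * qf p y (m+1) x
    have hrw : (fun z => if z = y then 0 else p x z * (b * qf p y m z))
        = fun z => b * (if z = y then 0 else p x z * qf p y m z) := by
      funext z; by_cases h : z = y
      · simp [h]
      · simp only [h, if_false]; ring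
    have h1 : (∑' z, if z = y then 0 else p x z * qf p y (m+n) z)
        ≤ ∑' z, if z = y then 0 else p x z * (b * qf p y m z) := by
      refine Summable.tsum_le_tsum (fun z => ?_) (qf_summand_summable hp y (m+n) x) ?_
      · by_cases h : z = y
        · simp [h]
        · simp only [h, if_false]
          exact mul_le_mul_of_nonneg_left (ih z) (hp.1 x z)
      · rw [hrw]; exact (qf_summand_summable hp y m x).mul_left b
    calc (∑' z, if z = y then 0 else p x z * qf p y (m+n) z)
        ≤ ∑' z, if z = y then 0 else p x z * (b * qf p y m z) := h1
      _ = b * ∑' z, if z = y then 0 else p x z * qf p y m z := by rw [hrw, tsum_mul_left]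
      _ = b * qf p y (m+1) x := rfl

end Main

/-- under the hypothesis of Theorem 2.2, every state is reached from every
starting point with probability one: `F(x,y) = ∑_{n≥1} f⁽ⁿ⁾(x,y) = 1`. -/
theorem reaches_every_state_with_probability_one {X : Type*} [Countable X]
    (p : X → X → ℝ) (hp : IsStochastic p)
    (hirr : ∀ x y : X, ∃ n : ℕ, 0 < matPow p n x y)
    (ε : ℝ) (hε : ε ∈ Set.Ioo (0 : ℝ) 1) (A : Finset X)
    (hA : ∀ x, ∑' y, (if y ∈ A then 0 else p x y) < ε) :
    ∀ x y : X, ∑' n : ℕ, fret p n x y = 1 := by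
  intro x₀ y
  classical
  set F : Finset X := A.erase y with hF
  set nfun : X → ℕ := fun a => (hirr a y).choose with hnfun
  have hnpos : ∀ a, 0 < matPow p (nfun a) a y := fun a => (hirr a y).choose_spec
  set M : ℕ := F.sup nfun with hM
  set δ : ℝ := if hFne : F.Nonempty then F.inf' hFne (fun a => matPow p (nfun a) a y) else 1
    with hδ
  have hδpos : 0 < δ := by
    rw [hδ]
    split
    · next hFne => exact (Finset.lt_inf'_iff hFne).mpr fun a _ => hnpos a
    · exact one_pos
  have hδle1 : δ ≤ 1 := by
    rw [hδ]
    split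
    · next hFne =>
      obtain ⟨a, ha⟩ := hFne
      exact le_trans (Finset.inf'_le _ ha) (matPow_le_one hp _ a y)
    · exact le_refl 1
  -- bound on qf at time M for states in F
  have hqM : ∀ a ∈ F, qf p y M a ≤ 1 - δ := by
    intro a ha
    have hay : a ≠ y := Finset.ne_of_mem_erase ha
    have h1 : qf p y (nfun a) a ≤ 1 - matPow p (nfun a) a y := by
      have := qf_add_matPow_le hp y (nfun a) a hay
      linarith
    have h2 : qf p y M a ≤ qf p y (nfun a) a :=
      qf_antitone hp y a (Finset.le_sup ha)
    have h3 : δ ≤ matPow p (nfun a) a y := by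
      rw [hδ]
      split
      · next hFne => exact Finset.inf'_le _ ha
      · next hFne => exact absurd ⟨a, ha⟩ hFne
    linarith
  -- the key uniform contraction bound
  have hkey : ∀ x, qf p y (M + 1) x ≤ 1 - δ * (1 - ε) := by
    intro x
    -- sum of p x over A is at least 1 - ε
    have hsplitA : ∑ z ∈ A, p x z + (∑' z, if z ∈ A then 0 else p x z) = 1 := by
      have hs1 : Summable (fun z => if z ∈ A then p x z else 0) :=
        summable_of_finite_support (Set.Finite.subset A.finite_toSet (by
          intro z hz
          simp only [Function.support, Set.mem_setOf_eq, ne_eq] at hz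
          by_cases h : z ∈ A
          · exact h
          · simp [h] at hz))
      have hs2 : Summable (fun z => if z ∈ A then 0 else p x z) :=
        summable_dom hp x
          (fun z => by by_cases h : z ∈ A
                       · simp [h]
                       · simp only [h, if_false]; exact hp.1 x z)
          (fun z => by by_cases h : z ∈ A
                       · simp [h]; exact hp.1 x z
                       · simp [h])
      have hadd := Summable.tsum_add hs1 hs2
      have hdecomp : (fun z => (if z ∈ A then p x z else 0) + if z ∈ A then 0 else p x z)
          = p x := by
        funext z; by_cases h : z ∈ A <;> simp [h]
      rw [hdecomp, hp.2.2 x] at hadd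
      have hfin : (∑' z, if z ∈ A then p x z else 0) = ∑ z ∈ A, p x z := by
        rw [tsum_eq_sum (s := A) (fun b hb => by simp [hb])]
        exact Finset.sum_congr rfl fun b hb => by simp [hb]
      rw [hfin] at hadd
      linarith
    have hAsum : 1 - ε ≤ ∑ z ∈ A, p x z := by
      have := hA x
      linarith
    -- pointwise bound
    have hpoint : ∀ z, (if z = y then 0 else p x z * qf p y M z)
        ≤ p x z - δ * (if z ∈ F then p x z else 0) - (if z = y then p x z else 0) := by
      intro z
      by_cases hzy : z = y
      · have hynF : y ∉ F := Finset.notMem_erase y A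
        simp [hzy, hynF]
      · by_cases hzF : z ∈ F
        · simp only [hzy, if_false, hzF, if_true]
          have := hqM z hzF
          nlinarith [hp.1 x z, qf_nonneg hp y M z]
        · simp only [hzy, if_false, hzF]
          have := qf_le_one hp y M z
          nlinarith [hp.1 x z, qf_nonneg hp y M z]
    -- summability of the RHS pieces
    have hsF : Summable (fun z => δ * (if z ∈ F then p x z else 0)) := by
      apply summable_of_finite_support
      apply Set.Finite.subset F.finite_toSet
      intro z hz
      simp only [Function.support, Set.mem_setOf_eq, ne_eq] at hz
      by_cases h : z ∈ F
      · exact h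
      · simp [h] at hz
    have hsy : Summable (fun z => if z = y then p x z else 0) := by
      apply summable_of_finite_support
      apply Set.Finite.subset (Set.finite_singleton y)
      intro z hz
      simp only [Function.support, Set.mem_setOf_eq, ne_eq] at hz
      by_cases h : z = y
      · simp [h]
      · simp [h] at hz
    have hsRHS : Summable (fun z => p x z - δ * (if z ∈ F then p x z else 0)
        - (if z = y then p x z else 0)) := ((hp.2.1 x).sub hsF).sub hsy
    have hle : qf p y (M+1) x ≤ ∑' z, (p x z - δ * (if z ∈ F then p x z else 0)
        - (if z = y then p x z else 0)) := by
      have : qf p y (M+1) x = ∑' z, if z = y then 0 else p x z * qf p y M z := rfl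
      rw [this]
      exact Summable.tsum_le_tsum hpoint (qf_summand_summable hp y M x) hsRHS
    have hval : (∑' z, (p x z - δ * (if z ∈ F then p x z else 0)
        - (if z = y then p x z else 0)))
        = 1 - δ * ∑ z ∈ F, p x z - p x y := by
      rw [Summable.tsum_sub ((hp.2.1 x).sub hsF) hsy, Summable.tsum_sub (hp.2.1 x) hsF, hp.2.2 x]
      have e1 : (∑' z, δ * (if z ∈ F then p x z else 0)) = δ * ∑ z ∈ F, p x z := by
        rw [tsum_mul_left]
        congr 1
        rw [tsum_eq_sum (s := F) (fun b hb => by simp [hb])]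
        exact Finset.sum_congr rfl fun b hb => by simp [hb]
      have e2 : (∑' z, if z = y then p x z else 0) = p x y := by
        rw [show (fun z => if z = y then p x z else 0) = fun z => if z = y then p x y else 0
          from funext fun z => by by_cases h : z = y <;> simp [h]]
        exact tsum_ite_eq y (fun _ => p x y)
      rw [e1, e2]
    -- combine
    have hFsum : ∑ z ∈ A, p x z ≤ ∑ z ∈ F, p x z + p x y := by
      have hsub : A ⊆ insert y F := by
        intro a ha
        by_cases h : a = y
        · simp [h]
        · exact Finset.mem_insert_of_mem (Finset.mem_erase.mpr ⟨h, ha⟩)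
      calc ∑ z ∈ A, p x z ≤ ∑ z ∈ insert y F, p x z :=
            Finset.sum_le_sum_of_subset_of_nonneg hsub (fun i _ _ => hp.1 x i)
        _ = p x y + ∑ z ∈ F, p x z :=
            Finset.sum_insert (Finset.notMem_erase y A)
        _ = ∑ z ∈ F, p x z + p x y := by ring
    have hFnonneg : 0 ≤ ∑ z ∈ F, p x z := Finset.sum_nonneg fun i _ => hp.1 x i
    have hyx : 0 ≤ p x y := hp.1 x y
    have : δ * (1 - ε) ≤ δ * ∑ z ∈ F, p x z + p x y := by
      calc δ * (1 - ε) ≤ δ * ∑ z ∈ A, p x z :=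
            mul_le_mul_of_nonneg_left hAsum (le_of_lt hδpos)
        _ ≤ δ * (∑ z ∈ F, p x z + p x y) :=
            mul_le_mul_of_nonneg_left hFsum (le_of_lt hδpos)
        _ = δ * ∑ z ∈ F, p x z + δ * p x y := by ring
        _ ≤ δ * ∑ z ∈ F, p x z + p x y := by nlinarith
    linarith [hle, hval.symm ▸ hle]
  -- iterate the contraction
  set c : ℝ := δ * (1 - ε) with hc
  have hcpos : 0 < c := mul_pos hδpos (by linarith [hε.2])
  have hcle1 : c ≤ 1 := by
    have h1 : 1 - ε ≤ 1 := by linarith [hε.1]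
    calc c = δ * (1 - ε) := hc
      _ ≤ 1 * 1 := mul_le_mul hδle1 h1 (by linarith [hε.2]) zero_le_one
      _ = 1 := mul_one 1
  have h1c0 : 0 ≤ 1 - c := by linarith
  have h1c1 : 1 - c < 1 := by linarith
  have hpow : ∀ k, ∀ z, qf p y (k * (M + 1)) z ≤ (1 - c) ^ k := by
    intro k
    induction k with
    | zero => intro z; rw [zero_mul, pow_zero]; exact qf_le_one hp y 0 z
    | succ k ih =>
      intro z
      have hidx : (k + 1) * (M + 1) = (M + 1) + k * (M + 1) := by ring
      rw [hidx]
      calc qf p y ((M + 1) + k * (M + 1)) z ≤ (1 - c) ^ k * qf p y (M + 1) z :=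
            qf_submul hp y (k * (M+1)) ((1-c)^k) (pow_nonneg h1c0 k) ih (M+1) z
        _ ≤ (1 - c) ^ k * (1 - c) :=
            mul_le_mul_of_nonneg_left (hkey z) (pow_nonneg h1c0 k)
        _ = (1 - c) ^ (k + 1) := (pow_succ (1-c) k).symm
  -- qf tends to zero
  have hdiv : Filter.Tendsto (fun n : ℕ => n / (M + 1)) Filter.atTop Filter.atTop := by
    apply Filter.tendsto_atTop_atTop.mpr
    intro b
    exact ⟨b * (M + 1), fun n hn => Nat.le_div_iff_mul_le (Nat.succ_pos M) |>.mpr hn⟩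
  have hupper : Filter.Tendsto (fun n : ℕ => (1 - c) ^ (n / (M + 1)))
      Filter.atTop (nhds 0) :=
    (tendsto_pow_atTop_nhds_zero_of_lt_one h1c0 h1c1).comp hdiv
  have htend : Filter.Tendsto (fun n => qf p y n x₀) Filter.atTop (nhds 0) := by
    apply tendsto_of_tendsto_of_tendsto_of_le_of_le tendsto_const_nhds hupper
    · intro n; exact qf_nonneg hp y n x₀
    · intro n
      calc qf p y n x₀ ≤ qf p y ((n / (M+1)) * (M+1)) x₀ :=
            qf_antitone hp y x₀ (Nat.div_mul_le_self n (M+1))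
        _ ≤ (1 - c) ^ (n / (M + 1)) := hpow _ x₀
  -- conclude
  have hfsummable : Summable (fun n => fret p n x₀ y) := by
    refine summable_of_sum_range_le (c := 1) (fun n => fret_nonneg hp y n x₀) ?_
    intro n
    cases n with
    | zero => simp
    | succ n =>
      have := qf_add_sum_fret hp y n x₀
      linarith [qf_nonneg hp y n x₀]
  have hpartial : Filter.Tendsto (fun n => ∑ k ∈ Finset.range (n+1), fret p k x₀ y)
      Filter.atTop (nhds 1) := by
    have heq : (fun n => ∑ k ∈ Finset.range (n+1), fret p k x₀ y)
        = fun n => 1 - qf p y n x₀ := by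
      funext n
      have := qf_add_sum_fret hp y n x₀
      linarith
    rw [heq]
    have := (tendsto_const_nhds (x := (1:ℝ)) (f := Filter.atTop (α := ℕ))).sub htend
    simpa using this
  have hpartial' : Filter.Tendsto (fun n => ∑ k ∈ Finset.range (n+1), fret p k x₀ y)
      Filter.atTop (nhds (∑' n, fret p n x₀ y)) := by
    have h1 := hfsummable.hasSum.tendsto_sum_nat
    exact h1.comp (Filter.tendsto_add_atTop_nat 1)
  exact tendsto_nhds_unique hpartial' hpartial
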